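/- For every T₀ > 0 there exists a constant C(T₀) > 0 such that for all T ≥ T₀ and all y ∈ [-1/2, 1/2)^d, the sum over x ∈ ℤ^d \ {0} of e^{-T|x+y|²} is at most C(T₀)^d · e^{-T/4}. -/
import Mathlib

open Real Finset

private lemma lgt_coord_sq (n : ℤ) {y : ℝ} (h1 : -(1:ℝ)/2 ≤ y) (h2 : y < 1/2) :
    ((n:ℝ))^2 / 4 ≤ ((n:ℝ) + y)^2 := by
  rcases lt_trichotomy n 0 with hn | hn | hn
  · have hr : (n:ℝ) ≤ -1 := by exact_mod_cast (by omega : n ≤ -1)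
    nlinarith [mul_nonneg (by linarith : (0:ℝ) ≤ -(n:ℝ) - 1) (by linarith : (0:ℝ) ≤ 1/2 - y),
      sq_nonneg (-(n:ℝ) - 1), sq_nonneg (1/2 - y)]
  · subst hn; simpa using sq_nonneg y
  · have hr : (1:ℝ) ≤ (n:ℝ) := by exact_mod_cast (by omega : (1:ℤ) ≤ n)
    nlinarith [mul_nonneg (by linarith : (0:ℝ) ≤ (n:ℝ) - 1) (by linarith : (0:ℝ) ≤ y + 1/2),
      sq_nonneg ((n:ℝ) - 1), sq_nonneg (y + 1/2)]

private lemma lgt_summable {a : ℝ} (ha : 0 < a) :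
    Summable fun n : ℤ => Real.exp (-a * (n:ℝ)^2) := by
  have hnat : Summable fun n : ℕ => Real.exp (-a * (n:ℝ)^2) := by
    refine Summable.of_nonneg_of_le (fun n => (Real.exp_pos _).le) (fun n => ?_)
      (summable_geometric_of_lt_one (Real.exp_pos (-a)).le ?_)
    · rw [← Real.exp_nat_mul]
      apply Real.exp_le_exp.mpr
      have h : (n:ℝ) ≤ (n:ℝ)^2 := by exact_mod_cast Nat.le_self_pow two_ne_zero n
      nlinarith
    · rw [Real.exp_lt_one_iff]; linarith
  apply Summable.of_nat_of_neg
  · exact hnat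
  · simpa using hnat

/-- For every `T₀ > 0` there is a constant `C(T₀) > 0`, independent of the dimension,
such that `∑_{x ∈ ℤ^d \ {0}} e^{-T|x+y|²} ≤ C(T₀)^d e^{-T/4}` uniformly in `T ≥ T₀`
and `y ∈ [-1/2, 1/2)^d`. -/
theorem lattice_gaussian_tail (T₀ : ℝ) (hT₀ : 0 < T₀) :
    ∃ C : ℝ, 0 < C ∧ ∀ (d : ℕ) (T : ℝ) (y : Fin d → ℝ), T₀ ≤ T →
      (∀ j, y j ∈ Set.Ico (-(1 : ℝ) / 2) (1 / 2)) →
      (∑' x : {x : Fin d → ℤ // x ≠ 0},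
        Real.exp (-T * ∑ j, ((x.1 j : ℝ) + y j) ^ 2)) ≤ C ^ d * Real.exp (-T / 4) := by
  set a : ℝ := T₀ / 4 with ha_def
  have ha : 0 < a := by positivity
  have hg : Summable fun n : ℤ => Real.exp (-a * (n:ℝ)^2) := lgt_summable ha
  set C₀ : ℝ := ∑' n : ℤ, Real.exp (-a * (n:ℝ)^2) with hC₀_def
  have hC₀1 : 1 ≤ C₀ := by
    have h := Summable.le_tsum hg 0 (fun n _ => (Real.exp_pos _).le)
    simpa [hC₀_def, neg_mul] using h
  refine ⟨C₀ * Real.exp (T₀ / 4), by positivity, ?_⟩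
  intro d T y hT hy
  rcases Nat.eq_zero_or_pos d with rfl | hd
  · have hE : IsEmpty {x : Fin 0 → ℤ // x ≠ 0} :=
      ⟨by rintro ⟨x, hx⟩; exact hx (funext fun j => j.elim0)⟩
    rw [tsum_empty]
    positivity
  apply tsum_le_of_sum_le' (by positivity)
  intro s
  have key : ∀ x : {x : Fin d → ℤ // x ≠ 0},
      Real.exp (-T * ∑ j, ((x.1 j : ℝ) + y j)^2)
        ≤ Real.exp (-T/4) * (Real.exp (T₀/4) * ∏ j, Real.exp (-a * ((x.1 j : ℤ):ℝ)^2)) := by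
    rintro ⟨x, hx⟩
    rw [← Real.exp_sum, ← Real.exp_add, ← Real.exp_add]
    apply Real.exp_le_exp.mpr
    have hQ1 : (1:ℝ) ≤ ∑ j, ((x j:ℝ))^2 := by
      obtain ⟨j₀, hj₀⟩ : ∃ j, x j ≠ 0 := by
        by_contra h; push_neg at h; exact hx (funext h)
      have h1 : (1:ℝ) ≤ ((x j₀:ℝ))^2 := by
        have : (1:ℤ) ≤ (x j₀)^2 := by
          rcases lt_or_gt_of_ne hj₀ with h | h <;> nlinarith
        exact_mod_cast this
      exact h1.trans (Finset.single_le_sum (fun j _ => sq_nonneg ((x j:ℝ))) (mem_univ j₀))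
    have hSQ : (∑ j, ((x j:ℝ))^2) / 4 ≤ ∑ j, ((x j:ℝ) + y j)^2 := by
      rw [Finset.sum_div]
      exact Finset.sum_le_sum fun j _ => lgt_coord_sq (x j) (hy j).1 (hy j).2
    have hsum : ∑ j, -a * ((x j:ℝ))^2 = -a * ∑ j, ((x j:ℝ))^2 := by
      rw [Finset.mul_sum]
    rw [hsum]
    set S := ∑ j, ((x j:ℝ) + y j)^2
    set Q := ∑ j, ((x j:ℝ))^2
    have hT0 : 0 ≤ T := le_trans hT₀.le hT
    nlinarith [mul_nonneg (by linarith : (0:ℝ) ≤ T - T₀) (by linarith : (0:ℝ) ≤ Q - 1),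
      mul_nonneg hT0 (by linarith : (0:ℝ) ≤ S - Q / 4)]
  have step1 : ∑ x ∈ s, Real.exp (-T * ∑ j, ((x.1 j : ℝ) + y j)^2)
      ≤ Real.exp (-T/4) * (Real.exp (T₀/4) *
        ∑ x ∈ s, ∏ j, Real.exp (-a * ((x.1 j : ℤ):ℝ)^2)) := by
    rw [Finset.mul_sum, Finset.mul_sum]
    exact Finset.sum_le_sum fun x _ => key x
  set t : Finset (Fin d → ℤ) := s.image Subtype.val with ht_def
  have himg : ∑ x ∈ s, ∏ j, Real.exp (-a * ((x.1 j : ℤ):ℝ)^2)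
      = ∑ v ∈ t, ∏ j, Real.exp (-a * ((v j : ℤ):ℝ)^2) := by
    rw [ht_def, Finset.sum_image (fun x _ y _ h => Subtype.ext h)]
  set B : Fin d → Finset ℤ := fun j => t.image (fun v => v j) with hB_def
  have hsub : t ⊆ Fintype.piFinset B := by
    intro v hv
    rw [Fintype.mem_piFinset]
    exact fun j => Finset.mem_image_of_mem _ hv
  have step2 : ∑ v ∈ t, ∏ j, Real.exp (-a * ((v j : ℤ):ℝ)^2)
      ≤ ∑ v ∈ Fintype.piFinset B, ∏ j, Real.exp (-a * ((v j : ℤ):ℝ)^2) :=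
    Finset.sum_le_sum_of_subset_of_nonneg hsub
      (fun v _ _ => Finset.prod_nonneg fun j _ => (Real.exp_pos _).le)
  have step3 : ∑ v ∈ Fintype.piFinset B, ∏ j, Real.exp (-a * ((v j : ℤ):ℝ)^2)
      = ∏ j : Fin d, ∑ n ∈ B j, Real.exp (-a * ((n : ℤ):ℝ)^2) :=
    (Finset.prod_univ_sum B fun _ n => Real.exp (-a * ((n : ℤ):ℝ)^2)).symm
  have step4 : ∏ j : Fin d, ∑ n ∈ B j, Real.exp (-a * ((n : ℤ):ℝ)^2) ≤ C₀ ^ d := by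
    calc ∏ j : Fin d, ∑ n ∈ B j, Real.exp (-a * ((n : ℤ):ℝ)^2)
        ≤ ∏ _j : Fin d, C₀ := by
          apply Finset.prod_le_prod
          · exact fun j _ => Finset.sum_nonneg fun n _ => (Real.exp_pos _).le
          · exact fun j _ => Summable.sum_le_tsum (B j) (fun n _ => (Real.exp_pos _).le) hg
      _ = C₀ ^ d := by simp
  have hfinal : Real.exp (-T/4) * (Real.exp (T₀/4) * C₀ ^ d)
      ≤ (C₀ * Real.exp (T₀/4)) ^ d * Real.exp (-T/4) := by
    rw [mul_pow]
    have h1 : Real.exp (T₀/4) ≤ Real.exp (T₀/4) ^ d :=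
      le_self_pow₀ (Real.one_le_exp (by positivity)) (by omega)
    calc Real.exp (-T/4) * (Real.exp (T₀/4) * C₀ ^ d)
        = (C₀ ^ d * Real.exp (T₀/4)) * Real.exp (-T/4) := by ring
      _ ≤ (C₀ ^ d * Real.exp (T₀/4) ^ d) * Real.exp (-T/4) :=
          mul_le_mul_of_nonneg_right
            (mul_le_mul_of_nonneg_left h1 (by positivity)) (Real.exp_pos _).le
  calc ∑ x ∈ s, Real.exp (-T * ∑ j, ((x.1 j : ℝ) + y j)^2)
      ≤ Real.exp (-T/4) * (Real.exp (T₀/4) *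
        ∑ x ∈ s, ∏ j, Real.exp (-a * ((x.1 j : ℤ):ℝ)^2)) := step1
    _ ≤ Real.exp (-T/4) * (Real.exp (T₀/4) * C₀ ^ d) := by
        rw [himg]
        have := step2.trans (step3.le.trans step4)
        exact mul_le_mul_of_nonneg_left
          (mul_le_mul_of_nonneg_left this (Real.exp_pos _).le) (Real.exp_pos _).le
    _ ≤ (C₀ * Real.exp (T₀/4)) ^ d * Real.exp (-T/4) := hfinal
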